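/- For n ≥ 3 and k = 2, the integral τ_2 ∫_0^π P_{2ℓ}(cos θ) dθ equals C(ℓ + n/2 − 2, ℓ)², where τ_2 = 1/π and P_{2ℓ} is the Gegenbauer (ultraspherical) polynomial of degree 2ℓ associated to the weight (1−t²)^{(n−3)/2}, normalized so that P_{2ℓ}(1) = C(2ℓ + n − 3, 2ℓ). Consequently the eigenvalue of S_2 on spherical harmonics of degree 2ℓ is λ_{2,2ℓ}² = C(ℓ + n/2 − 2, ℓ)² / C(2ℓ + n − 3, 2ℓ). -/

import Mathlib

/-- The Gegenbauer (ultraspherical) polynomial `C_m^{(lam)}`, defined by the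
standard three-term recurrence, normalized so that
`C_m^{(lam)}(1) = C(m + 2*lam - 1, m)`. -/
noncomputable def gegenbauer (lam : ℝ) : ℕ → ℝ → ℝ
  | 0 => fun _ => 1
  | 1 => fun x => 2 * lam * x
  | (m + 2) => fun x =>
      (2 * ((m : ℝ) + 1 + lam) * x * gegenbauer lam (m + 1) x
        - ((m : ℝ) + 2 * lam) * gegenbauer lam m x) / ((m : ℝ) + 2)

/-- Generalized binomial coefficient `C(x, m)` defined via the Gamma function. -/
noncomputable def genBinom (x : ℝ) (m : ℕ) : ℝ :=
  Real.Gamma (x + 1) / (Real.Gamma ((m : ℝ) + 1) * Real.Gamma (x - m + 1))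

lemma gegenbauer_continuous (lam : ℝ) (m : ℕ) : Continuous (gegenbauer lam m) := by
  induction m using Nat.strong_induction_on with
  | _ m ih =>
    match m with
    | 0 => simpa [gegenbauer] using continuous_const
    | 1 =>
      simp only [gegenbauer]
      fun_prop
    | (m+2) =>
      simp only [gegenbauer]
      have h1 := ih (m+1) (by omega)
      have h0 := ih m (by omega)
      fun_prop
noncomputable def cg (lam : ℝ) : ℕ → ℝ
  | 0 => 1
  | (k+1) => cg lam k * ((k:ℝ) + lam) / ((k:ℝ) + 1)

lemma cg_succ (lam : ℝ) (k : ℕ) : cg lam (k+1) = cg lam k * ((k:ℝ) + lam) / ((k:ℝ) + 1) := rfl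

lemma cos_prod (x y : ℝ) : Real.cos x * Real.cos y = (Real.cos (x + y) + Real.cos (x - y)) / 2 := by
  rw [Real.cos_add, Real.cos_sub]; ring

lemma gegenbauer_expand (lam θ : ℝ) (m : ℕ) :
    gegenbauer lam m (Real.cos θ) =
      ∑ k ∈ Finset.range (m+1), cg lam k * cg lam (m - k) * Real.cos (((m:ℝ) - 2*(k:ℝ)) * θ) := by
  induction m using Nat.strong_induction_on with
  | _ m ih =>
    match m with
    | 0 => simp [gegenbauer, cg]
    | 1 =>
      rw [Finset.sum_range_succ, Finset.sum_range_succ, Finset.sum_range_zero]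
      show 2 * lam * Real.cos θ = _
      norm_num [cg_succ, cg]
      ring
    | (m+2) =>
      have h1 := ih (m+1) (by omega)
      have h0 := ih m (by omega)
      show (2 * ((m : ℝ) + 1 + lam) * Real.cos θ * gegenbauer lam (m + 1) (Real.cos θ)
        - ((m : ℝ) + 2 * lam) * gegenbauer lam m (Real.cos θ)) / ((m : ℝ) + 2) = _
      rw [h1, h0, div_eq_iff (show ((m:ℝ)+2) ≠ 0 by positivity)]
      -- abbreviations
      set A := ∑ k ∈ Finset.range (m+2), cg lam k * cg lam (m+1-k) *
          Real.cos ((((m:ℝ)+2) - 2*(k:ℝ)) * θ) with hA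
      set B := ∑ k ∈ Finset.range (m+2), cg lam k * cg lam (m+1-k) *
          Real.cos ((((m:ℝ)+2) - 2*((k:ℝ)+1)) * θ) with hB
      have hAB : Real.cos θ * (∑ k ∈ Finset.range (m+1+1),
          cg lam k * cg lam (m+1-k) * Real.cos ((((m+1:ℕ):ℝ) - 2*(k:ℝ)) * θ)) = (A + B)/2 := by
        rw [hA, hB, Finset.mul_sum, ← Finset.sum_add_distrib, Finset.sum_div]
        apply Finset.sum_congr rfl
        intro k _
        have e1 : (((m:ℝ)+2) - 2*(k:ℝ))*θ = θ + ((((m+1:ℕ)):ℝ) - 2*(k:ℝ))*θ := by push_cast; ring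
        have e2 : (((m:ℝ)+2) - 2*((k:ℝ)+1))*θ = -(θ - ((((m+1:ℕ)):ℝ) - 2*(k:ℝ))*θ) := by
          push_cast; ring
        rw [e1, e2, Real.cos_neg]
        linear_combination (cg lam k * cg lam (m+1-k)) *
          cos_prod θ ((((m+1:ℕ):ℝ) - 2*(k:ℝ))*θ)
      have hFB : ∑ k ∈ Finset.range (m+3), (if k = 0 then 0 else
          cg lam (k-1) * cg lam (m+2-k) * Real.cos ((((m:ℝ)+2) - 2*(k:ℝ)) * θ)) = B := by
        rw [Finset.sum_range_succ', hB]
        simp only [Nat.succ_ne_zero, if_false, if_pos rfl, Nat.add_sub_cancel, Nat.sub_zero,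
          Nat.succ_sub_succ_eq_sub, add_zero, Nat.cast_add, Nat.cast_one, if_true]
      have hHA : ∑ k ∈ Finset.range (m+3), (if k ≤ m+1 then
          cg lam k * cg lam (m+1-k) * Real.cos ((((m:ℝ)+2) - 2*(k:ℝ)) * θ) else 0) = A := by
        rw [Finset.sum_range_succ, if_neg (by omega), add_zero, hA]
        apply Finset.sum_congr rfl
        intro k hk
        rw [if_pos (by simp at hk; omega)]
      have hGC : ∑ k ∈ Finset.range (m+3), (if 1 ≤ k ∧ k ≤ m+1 then
          cg lam (k-1) * cg lam (m+1-k) * Real.cos ((((m:ℝ)+2) - 2*(k:ℝ)) * θ) else 0)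
          = ∑ k ∈ Finset.range (m+1), cg lam k * cg lam (m-k) *
            Real.cos ((((m:ℕ):ℝ) - 2*(k:ℝ)) * θ) := by
        rw [Finset.sum_range_succ, if_neg (by omega), add_zero, Finset.sum_range_succ',
          if_neg (by omega), add_zero]
        apply Finset.sum_congr rfl
        intro k hk
        simp only [Finset.mem_range] at hk
        rw [if_pos (by omega), Nat.add_sub_cancel, Nat.succ_sub_succ_eq_sub]
        congr 1
        push_cast
        ring
      have e2l : 2 * ((m:ℝ) + 1 + lam) * Real.cos θ * (∑ k ∈ Finset.range (m+1+1),
          cg lam k * cg lam (m+1-k) * Real.cos ((((m+1:ℕ):ℝ) - 2*(k:ℝ)) * θ))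
          = ((m:ℝ) + 1 + lam) * (A + B) := by
        have : 2 * ((m:ℝ) + 1 + lam) * Real.cos θ * (∑ k ∈ Finset.range (m+1+1),
          cg lam k * cg lam (m+1-k) * Real.cos ((((m+1:ℕ):ℝ) - 2*(k:ℝ)) * θ))
          = 2 * ((m:ℝ) + 1 + lam) * (Real.cos θ * (∑ k ∈ Finset.range (m+1+1),
          cg lam k * cg lam (m+1-k) * Real.cos ((((m+1:ℕ):ℝ) - 2*(k:ℝ)) * θ))) := by ring
        rw [this, hAB]; ring
      rw [e2l, ← hFB, ← hHA, ← hGC, ← Finset.sum_add_distrib, Finset.mul_sum, Finset.mul_sum,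
        ← Finset.sum_sub_distrib, Finset.sum_mul]
      apply Finset.sum_congr rfl
      intro k hk
      simp only [Finset.mem_range] at hk
      rcases Nat.eq_zero_or_pos k with rfl | hkpos
      · simp only [if_pos rfl, if_neg (by omega : ¬(1 ≤ 0 ∧ 0 ≤ m+1)), if_pos (by omega : 0 ≤ m+1)]
        rw [Nat.sub_zero, Nat.sub_zero, cg_succ lam (m+1)]
        show ((m:ℝ)+1+lam) * (cg lam 0 * cg lam (m+1) * _ + 0) - ((m:ℝ)+2*lam) * 0 = _
        rw [cg]  -- cg lam 0 = 1?
        push_cast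
        have hne : ((m:ℝ)+1) + 1 ≠ 0 := by positivity
        field_simp
        ring
      · by_cases hk2 : k ≤ m + 1
        · -- main case : 1 ≤ k ≤ m+1
          obtain ⟨j, rfl⟩ : ∃ j, k = j + 1 := ⟨k - 1, by omega⟩
          have hjm : j ≤ m := by omega
          obtain ⟨d, rfl⟩ : ∃ d, m = j + d := ⟨m - j, by omega⟩
          rw [if_pos (show j+1 ≤ j+d+1 by omega), if_neg (show ¬(j+1=0) by omega),
            if_pos (show 1 ≤ j+1 ∧ j+1 ≤ j+d+1 by omega)]
          have s1 : j + d + 1 - (j + 1) = d := by omega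
          have s2 : j + d + 2 - (j + 1) = d + 1 := by omega
          have s3 : j + 1 - 1 = j := by omega
          rw [s1, s2, s3, cg_succ lam j, cg_succ lam d]
          have hne1 : ((j:ℝ)+1) ≠ 0 := by positivity
          have hne2 : ((d:ℝ)+1) ≠ 0 := by positivity
          push_cast
          field_simp
          ring
        · -- k = m+2
          have : k = m + 2 := by omega
          subst this
          rw [if_neg (by omega), if_neg (by omega), if_neg (by omega)]
          have s1 : m + 2 - 1 = m + 1 := by omega
          have s2 : m + 2 - (m+2) = 0 := by omega
          rw [s1, s2, cg_succ lam (m+1)]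
          show ((m:ℝ)+1+lam) * (0 + cg lam (m+1) * cg lam 0 * _) - ((m:ℝ)+2*lam) * 0 = _
          rw [cg]
          push_cast
          field_simp
          ring
lemma integral_cos_freq (c : ℤ) (hc : c ≠ 0) :
    ∫ θ in (0:ℝ)..Real.pi, Real.cos ((c:ℝ) * θ) = 0 := by
  have h := intervalIntegral.integral_comp_mul_left (fun x => Real.cos x)
    (a := (0:ℝ)) (b := Real.pi) (c := (c:ℝ)) (by exact_mod_cast hc)
  rw [h]
  simp [integral_cos, Real.sin_int_mul_pi]

lemma cg_gamma (lam : ℝ) (hl : 0 < lam) (k : ℕ) :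
    cg lam k = Real.Gamma ((k:ℝ) + lam) / (Real.Gamma ((k:ℝ) + 1) * Real.Gamma lam) := by
  induction k with
  | zero => simp [cg, Real.Gamma_one,
      (Real.Gamma_pos_of_pos hl).ne']
  | succ k ih =>
    rw [show cg lam (k+1) = cg lam k * ((k:ℝ) + lam) / ((k:ℝ) + 1) from rfl, ih]
    have h1 : Real.Gamma (((k:ℕ):ℝ) + 1 + lam) = ((k:ℝ) + lam) * Real.Gamma ((k:ℝ) + lam) := by
      rw [show ((k:ℝ) + 1 + lam) = ((k:ℝ) + lam) + 1 by ring, Real.Gamma_add_one (by positivity)]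
    have h2 : Real.Gamma (((k:ℕ):ℝ) + 1 + 1) = ((k:ℝ) + 1) * Real.Gamma ((k:ℝ) + 1) := by
      rw [Real.Gamma_add_one (by positivity)]
    push_cast
    rw [h1, h2]
    have g1 : Real.Gamma ((k:ℝ) + 1) ≠ 0 := (Real.Gamma_pos_of_pos (by positivity)).ne'
    have g2 : Real.Gamma lam ≠ 0 := (Real.Gamma_pos_of_pos hl).ne'
    have g3 : ((k:ℝ) + 1) ≠ 0 := by positivity
    field_simp


lemma sum_int (lam : ℝ) (ℓ : ℕ) :
    (∫ θ in (0:ℝ)..Real.pi, ∑ k ∈ Finset.range (2*ℓ+1),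
      cg lam k * cg lam (2*ℓ - k) * Real.cos ((((2*ℓ:ℕ):ℝ) - 2*(k:ℝ)) * θ))
    = Real.pi * cg lam ℓ ^ 2 := by
  rw [intervalIntegral.integral_finset_sum (fun k _ => by
    apply Continuous.intervalIntegrable; fun_prop)]
  rw [Finset.sum_eq_single_of_mem ℓ (Finset.mem_range.mpr (by omega))]
  · rw [intervalIntegral.integral_const_mul]
    have : ∀ θ:ℝ, Real.cos ((((2*ℓ:ℕ):ℝ) - 2*(ℓ:ℝ)) * θ) = 1 := by
      intro θ
      have : (((2*ℓ:ℕ):ℝ) - 2*(ℓ:ℝ)) = 0 := by push_cast; ring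
      rw [this]; simp
    simp only [this]
    rw [intervalIntegral.integral_const]
    have h2 : 2*ℓ - ℓ = ℓ := by omega
    rw [h2]
    simp
    ring
  · intro k hk hne
    rw [intervalIntegral.integral_const_mul]
    have hc : ((2*(ℓ:ℤ) - 2*(k:ℤ)) : ℤ) ≠ 0 := by
      simp only [Finset.mem_range] at hk
      omega
    have harg : ∀ θ:ℝ, ((((2*ℓ:ℕ):ℝ) - 2*(k:ℝ)) * θ) = (((2*(ℓ:ℤ) - 2*(k:ℤ)):ℤ):ℝ) * θ := by
      intro θ; push_cast; ring
    simp only [harg]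
    rw [integral_cos_freq _ hc]
    ring
open Set MeasureTheory intervalIntegral

lemma sub_int (P : ℝ → ℝ) (hP : Continuous P) :
    (∫ t in (-1:ℝ)..1, P t * (1 - t^2) ^ (-(1:ℝ)/2))
      = ∫ θ in (0:ℝ)..Real.pi, P (Real.cos θ) := by
  set g : ℝ → ℝ := fun t => P t * (1 - t^2) ^ (-(1:ℝ)/2) with hg
  -- integrability of g on Icc (-1) 1
  obtain ⟨M, hM⟩ := (isCompact_Icc : IsCompact (Icc (-1:ℝ) 1)).exists_bound_of_continuousOn
    hP.continuousOn
  set M₀ : ℝ := max M 0 with hM₀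
  have hM₀nonneg : 0 ≤ M₀ := le_max_right _ _
  have hM' : ∀ x ∈ Icc (-1:ℝ) 1, ‖P x‖ ≤ M₀ := fun x hx => (hM x hx).trans (le_max_left _ _)
  have i1 : IntervalIntegrable (fun t : ℝ => (1 - t) ^ (-(1:ℝ)/2)) volume (-1) 1 := by
    have h := ((intervalIntegrable_rpow' (r := -(1:ℝ)/2) (by norm_num)
      (a := (0:ℝ)) (b := 2)).comp_sub_left 1).symm
    norm_num at h ⊢
    exact h
  have i2 : IntervalIntegrable (fun t : ℝ => (1 + t) ^ (-(1:ℝ)/2)) volume (-1) 1 := by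
    have h := (intervalIntegrable_rpow' (r := -(1:ℝ)/2) (by norm_num)
      (a := (0:ℝ)) (b := 2)).comp_add_right 1
    have h' : ∀ t : ℝ, (t + 1) ^ (-(1:ℝ)/2) = (1 + t) ^ (-(1:ℝ)/2) := by
      intro t; rw [add_comm]
    norm_num at h ⊢
    simpa [add_comm] using h
  have hbound_int : IntegrableOn
      (fun t : ℝ => M₀ * ((1 - t) ^ (-(1:ℝ)/2) + (1 + t) ^ (-(1:ℝ)/2))) (Icc (-1:ℝ) 1) := by
    have := ((i1.add i2).const_mul M₀)
    rwa [intervalIntegrable_iff_integrableOn_Icc_of_le (by norm_num)] at this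
  have hgm : AEStronglyMeasurable g (volume.restrict (Icc (-1:ℝ) 1)) := by
    apply Measurable.aestronglyMeasurable
    exact hP.measurable.mul (Measurable.pow (measurable_const.sub (measurable_id'.pow_const 2)) measurable_const)
  have hg_int : IntegrableOn g (Icc (-1:ℝ) 1) := by
    apply Integrable.mono hbound_int hgm
    rw [ae_restrict_iff' measurableSet_Icc]
    refine ae_of_all _ fun t ht => ?_
    have h1t : (0:ℝ) ≤ 1 - t := by linarith [ht.2]
    have h2t : (0:ℝ) ≤ 1 + t := by linarith [ht.1]
    have hsq : (1 - t^2) = (1-t)*(1+t) := by ring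
    have hrnn : (0:ℝ) ≤ (1 - t^2) ^ (-(1:ℝ)/2) := Real.rpow_nonneg (by nlinarith [ht.1, ht.2]) _
    have key : (1 - t^2) ^ (-(1:ℝ)/2) ≤ (1 - t) ^ (-(1:ℝ)/2) + (1 + t) ^ (-(1:ℝ)/2) := by
      rw [hsq, Real.mul_rpow h1t h2t]
      rcases le_or_gt 0 t with htt | htt
      · have : (1 + t) ^ (-(1:ℝ)/2) ≤ 1 :=
          Real.rpow_le_one_of_one_le_of_nonpos (by linarith) (by norm_num)
        nlinarith [Real.rpow_nonneg h1t (-(1:ℝ)/2), Real.rpow_nonneg h2t (-(1:ℝ)/2)]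
      · have : (1 - t) ^ (-(1:ℝ)/2) ≤ 1 :=
          Real.rpow_le_one_of_one_le_of_nonpos (by linarith) (by norm_num)
        nlinarith [Real.rpow_nonneg h1t (-(1:ℝ)/2), Real.rpow_nonneg h2t (-(1:ℝ)/2)]
    have : ‖g t‖ ≤ M₀ * ((1 - t) ^ (-(1:ℝ)/2) + (1 + t) ^ (-(1:ℝ)/2)) := by
      rw [hg]
      simp only [norm_mul]
      rw [Real.norm_of_nonneg hrnn]
      exact mul_le_mul (hM' t ht) key hrnn hM₀nonneg
    refine this.trans (le_abs_self _)
  -- pointwise identity on the open interval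
  have hpt : ∀ x ∈ Ioo (0:ℝ) Real.pi, (-Real.sin x) • (g ∘ Real.cos) x = -(P (Real.cos x)) := by
    intro x hx
    have hs : 0 < Real.sin x := Real.sin_pos_of_pos_of_lt_pi hx.1 hx.2
    have h1 : 1 - Real.cos x ^ 2 = Real.sin x ^ 2 := by
      rw [Real.sin_sq]
    have h2 : (Real.sin x ^ 2 : ℝ) ^ (-(1:ℝ)/2) = (Real.sin x)⁻¹ := by
      rw [← Real.rpow_natCast (Real.sin x) 2, ← Real.rpow_mul hs.le]
      norm_num [Real.rpow_neg_one]
    simp only [hg, Function.comp, smul_eq_mul, h1, h2]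
    field_simp
  -- change of variables
  have hchg := intervalIntegral.integral_comp_smul_deriv''' (f := Real.cos)
    (f' := fun x => -Real.sin x) (g := g) (a := 0) (b := Real.pi)
    (Real.continuous_cos.continuousOn)
    (fun x _ => (Real.hasDerivAt_cos x).hasDerivWithinAt)
    ?_ ?_ ?_
  · -- use hchg to conclude
    rw [Real.cos_zero, Real.cos_pi] at hchg
    have hl : (∫ x in (0:ℝ)..Real.pi, (-Real.sin x) • (g ∘ Real.cos) x)
        = ∫ x in (0:ℝ)..Real.pi, -(P (Real.cos x)) := by
      apply intervalIntegral.integral_congr_ae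
      have hD : ∀ᵐ x : ℝ ∂volume, x ∉ ({Real.pi} : Set ℝ) := by
        have : volume ({Real.pi} : Set ℝ) = 0 := measure_singleton _
        exact (MeasureTheory.measure_eq_zero_iff_ae_notMem.mp this)
      filter_upwards [hD] with x hx hmem
      rw [Set.uIoc_of_le Real.pi_pos.le] at hmem
      have : x ∈ Ioo (0:ℝ) Real.pi := ⟨hmem.1, lt_of_le_of_ne hmem.2 (by simpa using hx)⟩
      exact hpt x this
    rw [hl, intervalIntegral.integral_neg] at hchg
    have hr : (∫ u in (1:ℝ)..(-1:ℝ), g u) = -∫ u in (-1:ℝ)..1, g u :=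
      intervalIntegral.integral_symm _ _
    rw [hr] at hchg
    have := neg_injective hchg
    rw [← this]
  · -- continuity of g on image
    have hsub : Real.cos '' Ioo (min 0 Real.pi) (max 0 Real.pi) ⊆ Ioo (-1:ℝ) 1 := by
      rw [min_eq_left Real.pi_pos.le, max_eq_right Real.pi_pos.le]
      rintro _ ⟨θ, hθ, rfl⟩
      constructor
      · have := Real.cos_lt_cos_of_nonneg_of_le_pi (le_of_lt hθ.1) le_rfl hθ.2
        simpa [Real.cos_pi] using this
      · have := Real.cos_lt_cos_of_nonneg_of_le_pi le_rfl hθ.2.le hθ.1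
        simpa [Real.cos_zero] using this
    apply ContinuousOn.mono _ hsub
    apply ContinuousOn.mul hP.continuousOn
    apply ContinuousOn.rpow_const
    · fun_prop
    · intro t ht
      left
      have : t^2 < 1 := by nlinarith [ht.1, ht.2]
      nlinarith
  · -- integrability of g on image of Icc
    apply hg_int.mono_set
    rintro _ ⟨θ, _, rfl⟩
    exact ⟨Real.neg_one_le_cos θ, Real.cos_le_one θ⟩
  · -- integrability of the substituted integrand
    rw [Set.uIcc_of_le Real.pi_pos.le]
    have hcont : IntegrableOn (fun x => -(P (Real.cos x))) (Icc (0:ℝ) Real.pi) :=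
      ((hP.comp Real.continuous_cos).neg).integrableOn_Icc
    apply hcont.congr
    have hD : ∀ᵐ x : ℝ ∂(volume.restrict (Icc (0:ℝ) Real.pi)),
        x ∉ ({0, Real.pi} : Set ℝ) := by
      apply ae_restrict_of_ae
      exact MeasureTheory.measure_eq_zero_iff_ae_notMem.mp (((Set.finite_singleton Real.pi).insert 0).measure_zero volume)
    filter_upwards [hD, ae_restrict_mem measurableSet_Icc] with x hx hmem
    have hxo : x ∈ Ioo (0:ℝ) Real.pi := by
      simp only [Set.mem_insert_iff, Set.mem_singleton_iff, not_or] at hx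
      exact ⟨lt_of_le_of_ne hmem.1 (Ne.symm hx.1), lt_of_le_of_ne hmem.2 hx.2⟩
    exact (hpt x hxo).symm

theorem gegenbauer_circle_average (n : ℕ) (hn : 3 ≤ n) (ℓ : ℕ) :
    (1 / Real.pi) *
        (∫ θ in (0 : ℝ)..Real.pi, gegenbauer (((n : ℝ) - 2) / 2) (2 * ℓ) (Real.cos θ))
      = genBinom ((ℓ : ℝ) + (n : ℝ) / 2 - 2) ℓ ^ 2 ∧
    (1 / Real.pi) *
        (∫ t in (-1 : ℝ)..1,
          gegenbauer (((n : ℝ) - 2) / 2) (2 * ℓ) t * (1 - t ^ 2) ^ (-(1 : ℝ) / 2)) /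
        ((2 * ℓ + n - 3).choose (2 * ℓ) : ℝ)
      = genBinom ((ℓ : ℝ) + (n : ℝ) / 2 - 2) ℓ ^ 2 / ((2 * ℓ + n - 3).choose (2 * ℓ) : ℝ) := by
  set lam : ℝ := ((n : ℝ) - 2) / 2 with hlam
  have hn3 : (3:ℝ) ≤ (n:ℝ) := by exact_mod_cast hn
  have hl : 0 < lam := by rw [hlam]; linarith
  have hcg : cg lam ℓ = genBinom ((ℓ : ℝ) + (n : ℝ) / 2 - 2) ℓ := by
    rw [cg_gamma lam hl ℓ, genBinom]
    have e1 : ((ℓ:ℝ) + (n:ℝ)/2 - 2) + 1 = (ℓ:ℝ) + lam := by rw [hlam]; ring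
    have e2 : ((ℓ:ℝ) + (n:ℝ)/2 - 2) - (ℓ:ℝ) + 1 = lam := by rw [hlam]; ring
    rw [e1, e2]
  have h1 : (1 / Real.pi) *
      (∫ θ in (0 : ℝ)..Real.pi, gegenbauer lam (2 * ℓ) (Real.cos θ))
      = genBinom ((ℓ : ℝ) + (n : ℝ) / 2 - 2) ℓ ^ 2 := by
    rw [intervalIntegral.integral_congr (g := fun θ => ∑ k ∈ Finset.range (2*ℓ+1),
      cg lam k * cg lam (2*ℓ - k) * Real.cos ((((2*ℓ:ℕ):ℝ) - 2*(k:ℝ)) * θ))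
      (fun θ _ => gegenbauer_expand lam θ (2*ℓ))]
    rw [sum_int lam ℓ, ← hcg]
    field_simp
  refine ⟨h1, ?_⟩
  rw [sub_int _ (gegenbauer_continuous lam (2*ℓ)), h1]
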